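/- Let n ≥ 3 and s ≥ 1 be integers, and let a = (a_1, …, a_n) ∈ ℤ^n be a primitive vector with all entries positive. Then the s-Frobenius number satisfies F_s(a) ≥ ϑ_s(S_{n−1}) · (a_1 a_2 ⋯ a_n)^{1/(n−1)} − (a_1 + a_2 + ⋯ + a_n), where ϑ_s(S_{n−1}) is the absolute s-inhomogeneous minimum of the standard (n−1)-dimensional simplex. -/

import Mathlib

open scoped BigOperators
open Matrix

noncomputable section

/-- The real matrix obtained from an integer matrix. -/
def Rmat {m n : ℕ} (A : Matrix (Fin m) (Fin n) ℤ) : Matrix (Fin m) (Fin n) ℝ :=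
  A.map (Int.cast : ℤ → ℝ)

/-- The real vector obtained from an integer vector. -/
def Rvec {m : ℕ} (b : Fin m → ℤ) : Fin m → ℝ := fun i => (b i : ℝ)

/-- The knapsack polytope P(A,b) = {x ≥ 0 : A x = b}. -/
def knap {m n : ℕ} (A : Matrix (Fin m) (Fin n) ℤ) (b : Fin m → ℝ) : Set (Fin n → ℝ) :=
  {x | (∀ i, 0 ≤ x i) ∧ (Rmat A).mulVec x = b}

/-- The set F_s(A) of integer vectors b for which P(A,b) contains at least s integer points. -/
def feas {m n : ℕ} (s : ℕ) (A : Matrix (Fin m) (Fin n) ℤ) : Set (Fin m → ℤ) :=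
  {b | s ≤ Set.ncard {x : Fin n → ℤ | (∀ i, 0 ≤ x i) ∧ A.mulVec x = b}}

/-- The cone generated by the columns of A. -/
def coneOf {m n : ℕ} (A : Matrix (Fin m) (Fin n) ℤ) : Set (Fin m → ℝ) :=
  {y | ∃ x : Fin n → ℝ, (∀ i, 0 ≤ x i) ∧ (Rmat A).mulVec x = y}

/-- The generalized diagonal s-Frobenius number g_s(A, w). -/
def gDiag {m n : ℕ} (s : ℕ) (A : Matrix (Fin m) (Fin n) ℤ) (w : Fin m → ℝ) : ℝ :=
  sInf {t : ℝ | 0 ≤ t ∧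
    ∀ b : Fin m → ℤ, Rvec b ∈ interior ((fun c => t • w + c) '' coneOf A) → b ∈ feas s A}

/-- v = A·1 is the sum of the columns of A (as a real vector). -/
def vA {m n : ℕ} (A : Matrix (Fin m) (Fin n) ℤ) : Fin m → ℝ :=
  (Rmat A).mulVec (fun _ => 1)

/-- The diagonal s-Frobenius number g_s(A) = g_s(A, A·1). -/
def gFrob {m n : ℕ} (s : ℕ) (A : Matrix (Fin m) (Fin n) ℤ) : ℝ := gDiag s A (vA A)

/-- The regularity assumptions: the m×m minors of A have gcd 1, and the only
nonnegative real solution of A x = 0 is x = 0. -/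
def regular {m n : ℕ} (A : Matrix (Fin m) (Fin n) ℤ) : Prop :=
  Finset.univ.gcd (fun I : Fin m ↪ Fin n => (A.submatrix id ⇑I).det) = 1 ∧
  ∀ x : Fin n → ℝ, (∀ i, 0 ≤ x i) → (Rmat A).mulVec x = 0 → x = 0

/-- The s-covering radius of K with respect to L: the smallest μ > 0 such that every
point of the real span of L lies in y + μK for at least s distinct y ∈ L. -/
def muCov {N : ℕ} (s : ℕ) (K L : Set (Fin N → ℝ)) : ℝ :=
  sInf {μ : ℝ | 0 < μ ∧ ∀ x ∈ Submodule.span ℝ L,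
    ∃ T : Finset (Fin N → ℝ), ↑T ⊆ L ∧ s ≤ T.card ∧ ∀ y ∈ T, ∃ k ∈ K, x = y + μ • k}

/-- The set of absolute values of m×m minors of A. -/
def minorAbs {m n : ℕ} (A : Matrix (Fin m) (Fin n) ℤ) : Set ℤ :=
  {d | ∃ I : Fin m ↪ Fin n, d = |(A.submatrix id ⇑I).det|}

/-- m(A): the minimal absolute m×m minor of A. -/
def mMin {m n : ℕ} (A : Matrix (Fin m) (Fin n) ℤ) : ℤ := sInf (minorAbs A)

/-- M(A): the maximal absolute m×m minor of A. -/
def mMax {m n : ℕ} (A : Matrix (Fin m) (Fin n) ℤ) : ℤ := sSup (minorAbs A)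

/-- The lattice L_A^⊥ = {z ∈ ℤ^n : A z = 0}, viewed as a subset of ℝ^n. -/
def kerLat {m n : ℕ} (A : Matrix (Fin m) (Fin n) ℤ) : Set (Fin n → ℝ) :=
  {x | ∃ z : Fin n → ℤ, A.mulVec z = 0 ∧ x = Rvec z}

/-- √(det (A Aᵀ)). -/
def sqrtDet {m n : ℕ} (A : Matrix (Fin m) (Fin n) ℤ) : ℝ :=
  Real.sqrt (((A * Aᵀ).det : ℤ) : ℝ)

/-- The s-Frobenius number of a positive primitive integer vector. -/
def sFrob {n : ℕ} (s : ℕ) (a : Fin n → ℤ) : ℤ :=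
  sSup {b : ℤ | Set.ncard {x : Fin n → ℤ | (∀ i, 0 ≤ x i) ∧ ∑ i, a i * x i = b} < s}

/-- The full-rank lattice in ℝ^d with basis the columns of an invertible matrix B. -/
def latSet {d : ℕ} (B : Matrix (Fin d) (Fin d) ℝ) : Set (Fin d → ℝ) :=
  {x | ∃ z : Fin d → ℤ, x = B.mulVec (fun i => (z i : ℝ))}

/-- The absolute s-inhomogeneous minimum ϑ_s(K) = inf_L μ_s(K,L)/det(L)^{1/d}. -/
def theta (s d : ℕ) (K : Set (Fin d → ℝ)) : ℝ :=
  sInf {r : ℝ | ∃ B : Matrix (Fin d) (Fin d) ℝ, B.det ≠ 0 ∧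
    r = muCov s K (latSet B) / |B.det| ^ ((1 : ℝ) / d)}

/-- The standard simplex S_d ⊂ ℝ^d. -/
def stdSimplex' (d : ℕ) : Set (Fin d → ℝ) :=
  {x | (∀ i, 0 ≤ x i) ∧ ∑ i, x i ≤ 1}


-- ===== auxiliary development =====
open Finset in

lemma bezout_finset {ι : Type*} [DecidableEq ι] (a : ι → ℤ) (S : Finset ι) :
    ∃ w : ι → ℤ, ∑ i ∈ S, a i * w i = S.gcd a := by
  classical
  induction S using Finset.induction_on with
  | empty => exact ⟨0, by simp⟩
  | insert i S' hi ih =>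
    obtain ⟨w, hw⟩ := ih
    rw [Finset.gcd_insert]
    refine ⟨fun j => if j = i then Int.gcdA (a i) (S'.gcd a)
      else w j * Int.gcdB (a i) (S'.gcd a), ?_⟩
    rw [Finset.sum_insert hi]
    simp only [if_pos rfl, if_true]
    have h2 : ∀ j ∈ S', a j * (if j = i then Int.gcdA (a i) (S'.gcd a)
        else w j * Int.gcdB (a i) (S'.gcd a)) = (a j * w j) * Int.gcdB (a i) (S'.gcd a) := by
      intro j hj
      rw [if_neg (by rintro rfl; exact hi hj)]; ring
    rw [Finset.sum_congr rfl h2, ← Finset.sum_mul, hw]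
    have h3 := Int.gcd_eq_gcd_ab (a i) (S'.gcd a)
    have habs : (Int.gcd (a i) (S'.gcd a) : ℤ) = gcd (a i) (S'.gcd a) := Int.coe_gcd _ _
    rw [habs] at h3
    linarith

section AuxFrob
open Finset
variable {d : ℕ} {a : Fin (d+1) → ℤ}

def reps (a : Fin (d+1) → ℤ) (b : ℤ) : Set (Fin (d+1) → ℤ) :=
  {x | (∀ i, 0 ≤ x i) ∧ ∑ i, a i * x i = b}

def sol (a w : Fin (d+1) → ℤ) (i0 i1 : Fin (d+1)) (b : ℤ) (j : ℕ) : Fin (d+1) → ℤ :=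
  fun i => if i = i0 then
      b * w i0 + (∑ i' ∈ univ.erase i0, a i' * ((b * w i') / (a i0))) - (j:ℤ) * a i1
    else (b * w i) % (a i0) + (if i = i1 then (j:ℤ) * (a i0) else 0)


lemma reps_finite (hpos : ∀ i, 0 < a i) (b : ℤ) : (reps a b).Finite := by
  apply (Set.finite_Icc (fun _ : Fin (d+1) => (0:ℤ)) (fun _ => |b|)).subset
  rintro x ⟨hx0, hxs⟩
  constructor
  · intro i; exact hx0 i
  · intro i
    have h1 : ∀ j ∈ univ, j ≠ i → 0 ≤ a j * x j :=
      fun j _ _ => mul_nonneg (hpos j).le (hx0 j)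
    have h2 : a i * x i ≤ b := hxs ▸ Finset.single_le_sum (f := fun j => a j * x j)
      (fun j _ => mul_nonneg (hpos j).le (hx0 j)) (mem_univ i)
    have h3 : x i ≤ a i * x i := le_mul_of_one_le_left (hx0 i) (hpos i)
    exact le_trans (h3.trans h2) (le_abs_self b)

lemma sol_sum (a w : Fin (d+1) → ℤ) (i0 i1 : Fin (d+1)) (h01 : i0 ≠ i1)
    (hw : ∑ i, a i * w i = 1) (b : ℤ) (j : ℕ) :
    ∑ i, a i * sol a w i0 i1 b j i = b := by
  classical
  rw [← Finset.add_sum_erase univ _ (mem_univ i0)]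
  have h1 : a i0 * sol a w i0 i1 b j i0 =
      a i0 * (b * w i0) + a i0 * (∑ i' ∈ univ.erase i0, a i' * ((b * w i') / (a i0)))
        - a i0 * ((j:ℤ) * a i1) := by
    simp only [sol, if_pos rfl, if_true]; ring
  have h2 : ∀ i ∈ univ.erase i0, a i * sol a w i0 i1 b j i =
      a i * (b * w i) - a i0 * (a i * ((b * w i) / (a i0)))
        + (if i = i1 then a i1 * ((j:ℤ) * a i0) else 0) := by
    intro i hi
    have hne : i ≠ i0 := (Finset.mem_erase.mp hi).1
    simp only [sol, if_neg hne]
    rw [Int.emod_def]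
    by_cases h : i = i1 <;> simp [h] <;> ring
  rw [h1, Finset.sum_congr rfl h2]
  rw [Finset.sum_add_distrib, Finset.sum_sub_distrib, ← Finset.mul_sum]
  rw [Finset.sum_ite_eq' (univ.erase i0) i1 (fun _ => a i1 * ((j:ℤ) * a i0))]
  rw [if_pos (Finset.mem_erase.mpr ⟨h01.symm, mem_univ i1⟩)]
  have h3 : a i0 * (b * w i0) + ∑ i ∈ univ.erase i0, a i * (b * w i) = b := by
    rw [Finset.add_sum_erase univ (fun i => a i * (b * w i)) (mem_univ i0)]
    have : ∑ i, a i * (b * w i) = b * ∑ i, a i * w i := by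
      rw [Finset.mul_sum]; exact Finset.sum_congr rfl (fun i _ => by ring)
    rw [this, hw, mul_one]
  linarith [h3]

lemma sol_mem (a w : Fin (d+1) → ℤ) (hpos : ∀ i, 0 < a i) (i0 i1 : Fin (d+1))
    (h01 : i0 ≠ i1) (hw : ∑ i, a i * w i = 1) (b : ℤ) (s j : ℕ) (hj : j < s)
    (hb : (∑ i ∈ univ.erase i0, a i * a i0) + (s:ℤ) * (a i0 * a i1) ≤ b) :
    sol a w i0 i1 b j ∈ reps a b := by
  classical
  have ha0 : 0 < a i0 := hpos i0
  have hsum := sol_sum a w i0 i1 h01 hw b j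
  have hne0 : ∀ i, i ≠ i0 → 0 ≤ sol a w i0 i1 b j i := by
    intro i hi
    simp only [sol, if_neg hi]
    have h1 := Int.emod_nonneg (b * w i) ha0.ne'
    have h2 : (0:ℤ) ≤ if i = i1 then (j:ℤ) * (a i0) else 0 := by
      split
      · positivity
      · exact le_refl 0
    linarith
  refine ⟨?_, hsum⟩
  intro i
  by_cases hi : i = i0
  swap
  · exact hne0 i hi
  subst hi
  have hsplit : a i * sol a w i i1 b j i + ∑ i' ∈ univ.erase i, a i' * sol a w i i1 b j i' = b :=
    (Finset.add_sum_erase univ (fun i' => a i' * sol a w i i1 b j i') (mem_univ i)).trans hsum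
  have hbound : ∀ i' ∈ univ.erase i, a i' * sol a w i i1 b j i' ≤
      a i' * (a i - 1) + (if i' = i1 then a i1 * ((j:ℤ) * a i) else 0) := by
    intro i' hi'
    have hne : i' ≠ i := (Finset.mem_erase.mp hi').1
    have hmod : (b * w i') % (a i) ≤ a i - 1 := by
      have := Int.emod_lt_of_pos (b * w i') ha0
      omega
    have hmod0 : 0 ≤ (b * w i') % (a i) := Int.emod_nonneg _ ha0.ne'
    have hpos' : (0:ℤ) < a i' := hpos i'
    simp only [sol, if_neg hne]
    by_cases h : i' = i1
    · subst h
      simp only [if_pos rfl, if_true]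
      nlinarith
    · rw [if_neg h, if_neg h]
      nlinarith
  have hSle : ∑ i' ∈ univ.erase i, a i' * sol a w i i1 b j i' ≤
      (∑ i' ∈ univ.erase i, a i' * (a i - 1)) + a i1 * ((j:ℤ) * a i) := by
    calc ∑ i' ∈ univ.erase i, a i' * sol a w i i1 b j i'
        ≤ ∑ i' ∈ univ.erase i, (a i' * (a i - 1) + (if i' = i1 then a i1 * ((j:ℤ) * a i) else 0)) :=
          Finset.sum_le_sum hbound
      _ = _ := by
          rw [Finset.sum_add_distrib,
            Finset.sum_ite_eq' (univ.erase i) i1 (fun _ => a i1 * ((j:ℤ) * a i)),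
            if_pos (Finset.mem_erase.mpr ⟨h01.symm, mem_univ i1⟩)]
  have hsub : ∑ i' ∈ univ.erase i, a i' * (a i - 1) =
      (∑ i' ∈ univ.erase i, a i' * a i) - ∑ i' ∈ univ.erase i, a i' := by
    rw [← Finset.sum_sub_distrib]
    exact Finset.sum_congr rfl (fun _ _ => by ring)
  have hposS : (0:ℤ) ≤ ∑ i' ∈ univ.erase i, a i' :=
    Finset.sum_nonneg (fun i' _ => (hpos i').le)
  have hj' : (j:ℤ) ≤ (s:ℤ) - 1 := by omega
  have ha1 : 0 < a i1 := hpos i1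
  have h5 : a i1 * ((j:ℤ) * a i) ≤ a i1 * (((s:ℤ) - 1) * a i) :=
    mul_le_mul_of_nonneg_left (mul_le_mul_of_nonneg_right hj' ha0.le) ha1.le
  have h6 : a i1 * (((s:ℤ) - 1) * a i) = (s:ℤ) * (a i * a i1) - a i * a i1 := by ring
  have h7 : (0:ℤ) ≤ a i * a i1 := mul_nonneg ha0.le ha1.le
  have hkey : 0 ≤ a i * sol a w i i1 b j i := by linarith
  exact (mul_nonneg_iff_of_pos_left ha0).mp hkey

end AuxFrob


open Finset
section AuxLat
variable {d : ℕ}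

def Gch (a' : Fin d → ℤ) (N : ℤ) : ℕ → ℕ
  | 0 => N.toNat
  | (k+1) => if h : k < d then Nat.gcd (Gch a' N k) (a' ⟨k, h⟩).natAbs else Gch a' N k

variable {a' : Fin d → ℤ} {N : ℤ}

lemma Gch_succ (k : ℕ) (h : k < d) :
    Gch a' N (k+1) = Nat.gcd (Gch a' N k) (a' ⟨k, h⟩).natAbs := by
  simp [Gch, dif_pos h]

lemma Gch_pos (hN : 0 < N) : ∀ k, 0 < Gch a' N k := by
  intro k
  induction k with
  | zero => simpa [Gch] using hN
  | succ k ih =>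
    by_cases h : k < d
    · rw [Gch_succ k h]; exact Nat.gcd_pos_of_pos_left _ ih
    · simpa [Gch, dif_neg h] using ih

lemma Gch_dvd_succ (k : ℕ) : Gch a' N (k+1) ∣ Gch a' N k := by
  by_cases h : k < d
  · rw [Gch_succ k h]; exact Nat.gcd_dvd_left _ _
  · simp [Gch, dif_neg h]

lemma Gch_dvd_of_le {k m : ℕ} (h : k ≤ m) : Gch a' N m ∣ Gch a' N k := by
  induction m with
  | zero => simpa [Nat.le_zero.mp h]
  | succ m ih =>
    rcases Nat.lt_or_ge k (m+1) with h' | h'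
    · exact (Gch_dvd_succ m).trans (ih (Nat.lt_succ_iff.mp h'))
    · have : k = m + 1 := le_antisymm h h'
      simp [this]

lemma Gch_dvd_a (k : ℕ) (h : k < d) : (Gch a' N (k+1) : ℤ) ∣ a' ⟨k, h⟩ := by
  rw [Gch_succ k h]
  have h1 : ((Nat.gcd (Gch a' N k) (a' ⟨k, h⟩).natAbs : ℕ) : ℤ) ∣ ((a' ⟨k, h⟩).natAbs : ℤ) :=
    Int.natCast_dvd_natCast.mpr (Nat.gcd_dvd_right _ _)
  exact h1.trans (Int.natAbs_dvd.mpr dvd_rfl)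

lemma Gch_bezout (hN : 0 < N) : ∀ k, k ≤ d → ∃ t : Fin d → ℤ, ∃ t' : ℤ,
    (∀ j : Fin d, k ≤ (j:ℕ) → t j = 0) ∧ (∑ j, a' j * t j) + N * t' = Gch a' N k := by
  intro k
  induction k with
  | zero =>
    intro _
    refine ⟨0, 1, fun j _ => rfl, ?_⟩
    simp [Gch, Int.toNat_of_nonneg hN.le]
  | succ k ih =>
    intro hk1
    have hk : k < d := hk1
    obtain ⟨t, t', hsupp, heq⟩ := ih (le_of_lt hk)
    set kf : Fin d := ⟨k, hk⟩
    set A : ℤ := Int.gcdA (Gch a' N k : ℤ) (a' kf)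
    set B : ℤ := Int.gcdB (Gch a' N k : ℤ) (a' kf)
    have hgcd : (Gch a' N (k+1) : ℤ) = (Gch a' N k : ℤ) * A + a' kf * B := by
      have h1 := Int.gcd_eq_gcd_ab (Gch a' N k : ℤ) (a' kf)
      have h2 : Int.gcd (Gch a' N k : ℤ) (a' kf) = Gch a' N (k+1) := by
        rw [Gch_succ k hk]; rfl
      rw [h2] at h1; exact h1
    refine ⟨fun j => A * t j + (if j = kf then B else 0), t' * A, ?_, ?_⟩
    · intro j hj
      have h1 : t j = 0 := hsupp j (by omega)
      have h2 : j ≠ kf := by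
        intro h; rw [h] at hj; simp only [kf] at hj; omega
      simp [h1, h2]
    · have hc : ∀ j ∈ univ, a' j * (A * t j + (if j = kf then B else 0)) =
          A * (a' j * t j) + (if j = kf then a' kf * B else 0) := by
        intro j _
        by_cases h : j = kf
        · subst h; simp only [if_pos rfl, if_true]; ring
        · rw [if_neg h, if_neg h]; ring
      have hsum : ∑ j, a' j * (A * t j + (if j = kf then B else 0)) =
          A * (∑ j, a' j * t j) + a' kf * B :=
        calc ∑ j, a' j * (A * t j + (if j = kf then B else 0))
            = ∑ j, (A * (a' j * t j) + (if j = kf then a' kf * B else 0)) :=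
              Finset.sum_congr rfl hc
          _ = _ := by
              rw [Finset.sum_add_distrib, ← Finset.mul_sum,
                Finset.sum_ite_eq' univ kf (fun _ => a' kf * B), if_pos (mem_univ kf)]
      rw [hsum, hgcd]
      have : ∑ j, a' j * t j = (Gch a' N k : ℤ) - N * t' := by linarith
      rw [this]; ring

lemma exists_basis_vec (hN : 0 < N) (k : Fin d) :
    ∃ v : Fin d → ℤ,
      (∀ i : Fin d, (k:ℕ) < (i:ℕ) → v i = 0) ∧
      v k = ((Gch a' N k / Gch a' N (k+1) : ℕ) : ℤ) ∧
      (N ∣ ∑ j, a' j * v j) := by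
  obtain ⟨t, t', hsupp, heq⟩ := Gch_bezout (a' := a') (N := N) hN k k.isLt.le
  set δ : ℤ := (Gch a' N ((k:ℕ)+1) : ℤ) with hδdef
  set γ : ℤ := ((Gch a' N k / Gch a' N ((k:ℕ)+1) : ℕ) : ℤ) with hγdef
  set α : ℤ := a' k / δ with hαdef
  have hδpos : (0:ℤ) < δ := by
    rw [hδdef]
    exact_mod_cast Gch_pos (a' := a') (N := N) hN ((k:ℕ)+1)
  have hδdvd : δ ∣ a' k := by
    have h := Gch_dvd_a (a' := a') (N := N) (k:ℕ) k.isLt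
    rw [hδdef]
    simpa using h
  have hαδ : α * δ = a' k := Int.ediv_mul_cancel hδdvd
  have hγδ : γ * δ = (Gch a' N k : ℤ) := by
    have : (Gch a' N k / Gch a' N ((k:ℕ)+1)) * Gch a' N ((k:ℕ)+1) = Gch a' N k :=
      Nat.div_mul_cancel (Gch_dvd_succ _)
    rw [hγdef, hδdef, ← Nat.cast_mul, this]
  refine ⟨fun i => γ * (if i = k then 1 else 0) - α * t i, ?_, ?_, ?_⟩
  · intro i hi
    have h1 : t i = 0 := hsupp i (by omega)
    have h2 : i ≠ k := by intro h; rw [h] at hi; omega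
    simp [h1, h2]
  · have h1 : t k = 0 := hsupp k le_rfl
    simp [h1, γ]
  · have hc : ∀ j ∈ univ, a' j * (γ * (if j = k then 1 else 0) - α * t j) =
        (if j = k then γ * a' k else 0) - α * (a' j * t j) := by
      intro j _
      by_cases h : j = k
      · subst h; simp only [if_pos rfl, if_true]; ring
      · rw [if_neg h, if_neg h]; ring
    have hsum : ∑ j, a' j * (γ * (if j = k then 1 else 0) - α * t j) =
        γ * a' k - α * (∑ j, a' j * t j) :=
      calc ∑ j, a' j * (γ * (if j = k then 1 else 0) - α * t j)
          = ∑ j, ((if j = k then γ * a' k else 0) - α * (a' j * t j)) :=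
            Finset.sum_congr rfl hc
        _ = _ := by
            rw [Finset.sum_sub_distrib, ← Finset.mul_sum,
              Finset.sum_ite_eq' univ k (fun _ => γ * a' k), if_pos (mem_univ k)]
    rw [hsum]
    have h2 : ∑ j, a' j * t j = (Gch a' N k : ℤ) - N * t' := by linarith
    rw [h2]
    have h3 : γ * a' k - α * ((Gch a' N k : ℤ) - N * t') = N * (α * t') := by
      have : γ * a' k = α * (Gch a' N k : ℤ) := by
        calc γ * a' k = γ * (α * δ) := by rw [hαδ]
          _ = α * (γ * δ) := by ring
          _ = α * (Gch a' N k : ℤ) := by rw [hγδ]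
      rw [this]; ring
    rw [h3]
    exact Dvd.intro _ rfl
end AuxLat

section AuxLat2
variable {d : ℕ} {a' : Fin d → ℤ} {N : ℤ}

lemma Gch_prod (m : ℕ) :
    (∏ k ∈ Finset.range m, (Gch a' N k / Gch a' N (k+1))) * Gch a' N m = Gch a' N 0 := by
  induction m with
  | zero => simp
  | succ m ih =>
    rw [Finset.prod_range_succ, mul_assoc, Nat.div_mul_cancel (Gch_dvd_succ (a' := a') (N := N) m)]
    exact ih

lemma Gch_dvd_N (hN : 0 < N) (k : ℕ) : (Gch a' N k : ℤ) ∣ N := by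
  have h1 : Gch a' N k ∣ Gch a' N 0 := Gch_dvd_of_le (Nat.zero_le k)
  have h2 : ((Gch a' N k : ℕ) : ℤ) ∣ ((Gch a' N 0 : ℕ) : ℤ) := Int.natCast_dvd_natCast.mpr h1
  simpa [Gch, Int.toNat_of_nonneg hN.le] using h2

lemma span_lattice (hN : 0 < N) (v : Fin d → Fin d → ℤ)
    (hsupp : ∀ k i : Fin d, (k:ℕ) < (i:ℕ) → v k i = 0)
    (hdiag : ∀ k : Fin d, v k k = ((Gch a' N k / Gch a' N (k+1) : ℕ) : ℤ))
    (hdvd : ∀ k : Fin d, N ∣ ∑ j, a' j * v k j) :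
    ∀ k, k ≤ d → ∀ z : Fin d → ℤ, (N ∣ ∑ j, a' j * z j) →
      (∀ i : Fin d, k ≤ (i:ℕ) → z i = 0) →
      ∃ w : Fin d → ℤ, ∀ i, z i = ∑ j, w j * v j i := by
  intro k
  induction k with
  | zero =>
    intro _ z _ hz0
    exact ⟨0, fun i => by simp [hz0 i (Nat.zero_le _)]⟩
  | succ k ih =>
    intro hk1 z hzdvd hz0
    have hk : k < d := hk1
    set kf : Fin d := ⟨k, hk⟩ with hkf
    have hGkN : (Gch a' N k : ℤ) ∣ N := Gch_dvd_N hN k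
    have hdvd_sum : (Gch a' N k : ℤ) ∣ ∑ j, a' j * z j := hGkN.trans hzdvd
    have hsplit : a' kf * z kf + ∑ j ∈ univ.erase kf, a' j * z j = ∑ j, a' j * z j :=
      Finset.add_sum_erase univ (fun j => a' j * z j) (mem_univ kf)
    have herase : (Gch a' N k : ℤ) ∣ ∑ j ∈ univ.erase kf, a' j * z j := by
      refine Finset.dvd_sum ?_
      intro j hj
      have hne : j ≠ kf := (Finset.mem_erase.mp hj).1
      rcases Nat.lt_or_ge (j : ℕ) k with h' | h'
      · have h2 : Gch a' N k ∣ Gch a' N ((j:ℕ)+1) := Gch_dvd_of_le (by omega)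
        have h3 : (Gch a' N ((j:ℕ)+1) : ℤ) ∣ a' j := by
          have := Gch_dvd_a (a' := a') (N := N) (j:ℕ) j.isLt
          simpa using this
        exact ((Int.natCast_dvd_natCast.mpr h2).trans h3).mul_right _
      · have hj1 : k + 1 ≤ (j:ℕ) := by
          rcases Nat.eq_or_lt_of_le h' with h'' | h''
          · exact absurd (Fin.ext h''.symm : j = kf) hne
          · omega
        rw [hz0 j hj1, mul_zero]
        exact dvd_zero _
    have hterm : (Gch a' N k : ℤ) ∣ a' kf * z kf := by
      have heq : a' kf * z kf = (∑ j, a' j * z j) - ∑ j ∈ univ.erase kf, a' j * z j := by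
        linarith [hsplit]
      rw [heq]; exact dvd_sub hdvd_sum herase
    have hδpos : 0 < Gch a' N (k+1) := Gch_pos hN _
    have hnat : Gch a' N k ∣ (a' kf).natAbs * (z kf).natAbs := by
      rw [← Int.natAbs_mul]
      exact Int.natCast_dvd.mp hterm
    -- divide by the gcd
    have hGs : Gch a' N (k+1) = Nat.gcd (Gch a' N k) (a' kf).natAbs := Gch_succ k hk
    have hcop : Nat.Coprime (Gch a' N k / Gch a' N (k+1)) ((a' kf).natAbs / Gch a' N (k+1)) := by
      rw [hGs]
      exact Nat.coprime_div_gcd_div_gcd (hGs ▸ hδpos)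
    obtain ⟨c, hc⟩ := hnat
    have hγδ : (Gch a' N k / Gch a' N (k+1)) * Gch a' N (k+1) = Gch a' N k :=
      Nat.div_mul_cancel (Gch_dvd_succ k)
    have hαδ : ((a' kf).natAbs / Gch a' N (k+1)) * Gch a' N (k+1) = (a' kf).natAbs :=
      Nat.div_mul_cancel (hGs ▸ Nat.gcd_dvd_right _ _)
    have hγZ : (Gch a' N k / Gch a' N (k+1)) ∣ (z kf).natAbs := by
      refine hcop.dvd_of_dvd_mul_left ?_
      refine (Nat.mul_dvd_mul_iff_right hδpos).mp ?_
      calc Gch a' N k / Gch a' N (k+1) * Gch a' N (k+1) = Gch a' N k := hγδ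
        _ ∣ ((a' kf).natAbs / Gch a' N (k+1)) * (z kf).natAbs * Gch a' N (k+1) := by
            refine ⟨c, ?_⟩
            calc ((a' kf).natAbs / Gch a' N (k+1)) * (z kf).natAbs * Gch a' N (k+1)
                = (((a' kf).natAbs / Gch a' N (k+1)) * Gch a' N (k+1)) * (z kf).natAbs := by ring
              _ = (a' kf).natAbs * (z kf).natAbs := by rw [hαδ]
              _ = Gch a' N k * c := hc
    have hγz : (((Gch a' N k / Gch a' N (k+1) : ℕ)) : ℤ) ∣ z kf :=
      (Int.natCast_dvd).mpr hγZ
    set γ : ℤ := (((Gch a' N k / Gch a' N (k+1) : ℕ)) : ℤ) with hγdef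
    set q : ℤ := z kf / γ with hqdef
    have hq : γ * q = z kf := Int.mul_ediv_cancel' hγz
    set z' : Fin d → ℤ := fun i => z i - q * v kf i with hz'def
    have hz'dvd : N ∣ ∑ j, a' j * z' j := by
      have hsum : ∑ j, a' j * z' j = (∑ j, a' j * z j) - q * ∑ j, a' j * v kf j := by
        rw [Finset.mul_sum, ← Finset.sum_sub_distrib]
        exact Finset.sum_congr rfl (fun j _ => by simp only [hz'def]; ring)
      rw [hsum]
      exact dvd_sub hzdvd ((hdvd kf).mul_left q)
    have hz'0 : ∀ i : Fin d, k ≤ (i:ℕ) → z' i = 0 := by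
      intro i hi
      rcases Nat.eq_or_lt_of_le hi with h' | h'
      · have : i = kf := Fin.ext h'.symm
        subst this
        simp only [hz'def, hdiag kf, ← hγdef]
        rw [mul_comm] at hq
        exact sub_eq_zero.mpr hq.symm
      · simp only [hz'def, hz0 i h', hsupp kf i h', mul_zero, sub_zero]
    obtain ⟨w', hw'⟩ := ih (by omega) z' hz'dvd hz'0
    refine ⟨fun j => w' j + if j = kf then q else 0, fun i => ?_⟩
    have hc2 : ∀ j ∈ univ, (w' j + if j = kf then q else 0) * v j i =
        w' j * v j i + (if j = kf then q * v kf i else 0) := by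
      intro j _
      by_cases h : j = kf
      · subst h; simp only [if_pos rfl, if_true]; ring
      · rw [if_neg h, if_neg h]; ring
    calc z i = z' i + q * v kf i := by simp [hz'def]
      _ = (∑ j, w' j * v j i) + q * v kf i := by rw [hw' i]
      _ = ∑ j, (w' j * v j i + (if j = kf then q * v kf i else 0)) := by
          rw [Finset.sum_add_distrib, Finset.sum_ite_eq' univ kf (fun _ => q * v kf i),
            if_pos (mem_univ kf)]
      _ = ∑ j, (w' j + if j = kf then q else 0) * v j i :=
          (Finset.sum_congr rfl hc2).symm
end AuxLat2


open Finset in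
lemma covering_mem {d s : ℕ} (hd : 2 ≤ d) (hs : 1 ≤ s) (a : Fin (d+1) → ℤ)
    (hpos : ∀ i, 0 < a i)
    (v : Fin d → Fin d → ℤ)
    (hspan : ∀ z : Fin d → ℤ, ((a (Fin.last d)) ∣ ∑ j, a j.castSucc * z j) →
      ∃ w : Fin d → ℤ, ∀ i, z i = ∑ j, w j * v j i)
    (Fs : ℤ) (hFs1 : -1 ≤ Fs) (hFs2 : ∀ b : ℤ, Fs < b → s ≤ (reps a b).ncard)
    (B : Matrix (Fin d) (Fin d) ℝ) (hB : ∀ i j, B i j = ((a i.castSucc * v j i : ℤ) : ℝ)) :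
    (0:ℝ) < (Fs : ℝ) + ∑ i, (a i : ℝ) ∧ ∀ x ∈ Submodule.span ℝ (latSet B),
      ∃ T : Finset (Fin d → ℝ), ↑T ⊆ latSet B ∧ s ≤ T.card ∧
        ∀ y ∈ T, ∃ k ∈ stdSimplex' d, x = y + ((Fs : ℝ) + ∑ i, (a i : ℝ)) • k := by
  classical
  set N : ℤ := a (Fin.last d) with hNdef
  have hN : 0 < N := hpos _
  set g : ℝ := (Fs : ℝ) + ∑ i, (a i : ℝ) with hgdef
  have hsuma : ((d:ℝ) + 1) ≤ ∑ i, (a i : ℝ) := by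
    calc ((d:ℝ) + 1) = ∑ _i : Fin (d+1), (1:ℝ) := by
          rw [Finset.sum_const, Finset.card_univ, Fintype.card_fin]; push_cast; ring
      _ ≤ ∑ i, (a i : ℝ) := Finset.sum_le_sum (fun i _ => by exact_mod_cast hpos i)
  have hg : 0 < g := by
    have : (-1 : ℝ) ≤ (Fs : ℝ) := by exact_mod_cast hFs1
    have hd' : (2:ℝ) ≤ (d:ℝ) := by exact_mod_cast hd
    rw [hgdef]; linarith
  refine ⟨hg, ?_⟩
  intro x _
  -- the floor vector
  set m : Fin d → ℤ := fun i => ⌊x i / (a i.castSucc : ℝ)⌋ with hmdef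
  set c : ℤ := ∑ i : Fin d, a i.castSucc * m i with hcdef
  set b' : ℤ := Fs + 1 + (c - Fs - 1) % N with hb'def
  have hrange1 : Fs < b' := by
    have := Int.emod_nonneg (c - Fs - 1) hN.ne'
    omega
  have hrange2 : b' ≤ Fs + N := by
    have := Int.emod_lt_of_pos (c - Fs - 1) hN
    omega
  have hcongr : c - b' = N * ((c - Fs - 1) / N) := by
    have := Int.mul_ediv_add_emod (c - Fs - 1) N
    omega
  -- the representation set
  have hreps : s ≤ (reps a b').ncard := hFs2 b' hrange1
  have hfin : (reps a b').Finite := reps_finite hpos b'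
  set U : Finset (Fin (d+1) → ℤ) := hfin.toFinset with hUdef
  have hUcard : s ≤ U.card := by
    have h1 : (↑U : Set (Fin (d+1) → ℤ)) = reps a b' := hfin.coe_toFinset
    calc s ≤ (reps a b').ncard := hreps
      _ = (↑U : Set (Fin (d+1) → ℤ)).ncard := by rw [h1]
      _ = U.card := Set.ncard_coe_finset U
  have hUmem : ∀ u ∈ U, (∀ i, 0 ≤ u i) ∧ ∑ i, a i * u i = b' := by
    intro u hu
    have := (hfin.mem_toFinset).mp hu
    exact this
  -- decomposition of the full sum
  have hdecomp : ∀ u : Fin (d+1) → ℤ, ∑ i, a i * u i =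
      (∑ i : Fin d, a i.castSucc * u i.castSucc) + N * u (Fin.last d) := by
    intro u
    rw [Fin.sum_univ_castSucc (f := fun i => a i * u i)]
  -- the map into the lattice
  set Φ : (Fin (d+1) → ℤ) → (Fin d → ℝ) :=
    fun u => fun i => (a i.castSucc : ℝ) * ((m i : ℝ) - (u i.castSucc : ℝ)) with hΦdef
  set T : Finset (Fin d → ℝ) := U.image Φ with hTdef
  have hinj : Set.InjOn Φ ↑U := by
    intro u hu u' hu' heq
    have hsum := (hUmem u hu).2
    have hsum' := (hUmem u' hu').2
    have hcs : ∀ i : Fin d, u i.castSucc = u' i.castSucc := by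
      intro i
      have h1 : (a i.castSucc : ℝ) * ((m i : ℝ) - (u i.castSucc : ℝ)) =
          (a i.castSucc : ℝ) * ((m i : ℝ) - (u' i.castSucc : ℝ)) := congrFun heq i
      have ha : (a i.castSucc : ℝ) ≠ 0 := by exact_mod_cast (hpos i.castSucc).ne'
      have h2 : ((m i : ℝ) - (u i.castSucc : ℝ)) = ((m i : ℝ) - (u' i.castSucc : ℝ)) :=
        mul_left_cancel₀ ha h1
      have : ((u i.castSucc : ℤ) : ℝ) = ((u' i.castSucc : ℤ) : ℝ) := by linarith
      exact_mod_cast this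
    funext i
    refine Fin.lastCases ?_ (fun j => hcs j) i
    · have h3 : N * u (Fin.last d) = N * u' (Fin.last d) := by
        rw [hdecomp u] at hsum
        rw [hdecomp u'] at hsum'
        have : ∑ i : Fin d, a i.castSucc * u i.castSucc =
            ∑ i : Fin d, a i.castSucc * u' i.castSucc :=
          Finset.sum_congr rfl (fun i _ => by rw [hcs i])
        omega
      exact mul_left_cancel₀ hN.ne' h3
  have hTcard : s ≤ T.card := by
    rw [hTdef, Finset.card_image_of_injOn hinj]
    exact hUcard
  -- lattice membership of the image points
  have hTlat : ∀ u ∈ U, Φ u ∈ latSet B := by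
    intro u hu
    obtain ⟨hu0, husum⟩ := hUmem u hu
    set z : Fin d → ℤ := fun i => m i - u i.castSucc with hzdef
    have hzdvd : N ∣ ∑ j, a j.castSucc * z j := by
      have hsz : ∑ j, a j.castSucc * z j = c - (b' - N * u (Fin.last d)) := by
        have h4 : ∑ i : Fin d, a i.castSucc * u i.castSucc = b' - N * u (Fin.last d) := by
          rw [hdecomp u] at husum; omega
        rw [hcdef, ← h4, ← Finset.sum_sub_distrib]
        exact Finset.sum_congr rfl (fun j _ => by rw [hzdef]; ring)
      rw [hsz]
      have : c - (b' - N * u (Fin.last d)) = N * ((c - Fs - 1) / N) + N * u (Fin.last d) := by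
        omega
      rw [this]
      exact dvd_add (Dvd.intro _ rfl) (Dvd.intro _ rfl)
    obtain ⟨wz, hwz⟩ := hspan z hzdvd
    refine ⟨wz, ?_⟩
    funext i
    rw [Matrix.mulVec, dotProduct]
    simp only [hB]
    have : ∀ j ∈ univ, ((a i.castSucc * v j i : ℤ) : ℝ) * (wz j : ℝ) =
        ((a i.castSucc * (wz j * v j i) : ℤ) : ℝ) := by
      intro j _; push_cast; ring
    rw [Finset.sum_congr rfl this, ← Int.cast_sum, ← Finset.mul_sum, ← hwz i]
    rw [hΦdef]
    push_cast
    simp only [hzdef]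
    push_cast
    ring
  refine ⟨T, ?_, hTcard, ?_⟩
  · intro y hy
    obtain ⟨u, hu, rfl⟩ := Finset.mem_image.mp (Finset.mem_coe.mp hy)
    exact hTlat u hu
  · intro y hy
    obtain ⟨u, hu, rfl⟩ := Finset.mem_image.mp hy
    obtain ⟨hu0, husum⟩ := hUmem u hu
    have hapos : ∀ i : Fin d, (0:ℝ) < (a i.castSucc : ℝ) :=
      fun i => by exact_mod_cast hpos i.castSucc
    have hflo : ∀ i : Fin d, (m i : ℝ) * (a i.castSucc : ℝ) ≤ x i := by
      intro i
      have h1 : (m i : ℝ) ≤ x i / (a i.castSucc : ℝ) := Int.floor_le _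
      exact (le_div_iff₀ (hapos i)).mp h1
    have hfhi : ∀ i : Fin d, x i < ((m i : ℝ) + 1) * (a i.castSucc : ℝ) := by
      intro i
      have h1 : x i / (a i.castSucc : ℝ) < (m i : ℝ) + 1 := Int.lt_floor_add_one _
      exact (div_lt_iff₀ (hapos i)).mp h1
    refine ⟨fun i => (x i - Φ u i) / g, ⟨?_, ?_⟩, ?_⟩
    · intro i
      apply div_nonneg _ hg.le
      have h1 : (0:ℝ) ≤ (a i.castSucc : ℝ) * (u i.castSucc : ℝ) :=
        mul_nonneg (hapos i).le (by exact_mod_cast hu0 i.castSucc)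
      have h2 : Φ u i = (a i.castSucc : ℝ) * (m i : ℝ) - (a i.castSucc : ℝ) * (u i.castSucc : ℝ) := by
        rw [hΦdef]; ring
      have h3 := hflo i
      rw [h2]
      linarith [hflo i]
    · rw [← Finset.sum_div]
      rw [div_le_one hg]
      have hsplit2 : ∑ i : Fin d, (x i - Φ u i) =
          (∑ i : Fin d, (x i - (a i.castSucc : ℝ) * (m i : ℝ)))
            + ∑ i : Fin d, (a i.castSucc : ℝ) * (u i.castSucc : ℝ) := by
        rw [← Finset.sum_add_distrib]
        refine Finset.sum_congr rfl (fun i _ => ?_)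
        rw [hΦdef]; ring
      have hS1 : (∑ i : Fin d, (x i - (a i.castSucc : ℝ) * (m i : ℝ)))
          ≤ ∑ i : Fin d, (a i.castSucc : ℝ) := by
        refine Finset.sum_le_sum (fun i _ => ?_)
        have := hfhi i
        nlinarith [hfhi i]
      have hS2 : ∑ i : Fin d, (a i.castSucc : ℝ) * (u i.castSucc : ℝ) =
          ((b' - N * u (Fin.last d) : ℤ) : ℝ) := by
        have h4 : ∑ i : Fin d, a i.castSucc * u i.castSucc = b' - N * u (Fin.last d) := by
          rw [hdecomp u] at husum; omega
        rw [← h4]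
        push_cast
        rfl
      have hS2le : ∑ i : Fin d, (a i.castSucc : ℝ) * (u i.castSucc : ℝ) ≤ ((Fs : ℝ) + (N : ℝ)) := by
        rw [hS2]
        have h5 : b' - N * u (Fin.last d) ≤ Fs + N := by
          have h6 : 0 ≤ N * u (Fin.last d) := mul_nonneg hN.le (hu0 _)
          omega
        exact_mod_cast h5
      have hgsplit : g = (Fs : ℝ) + ((∑ i : Fin d, (a i.castSucc : ℝ)) + (N : ℝ)) := by
        rw [hgdef, Fin.sum_univ_castSucc (f := fun i => (a i : ℝ))]
      linarith [hsplit2, hS1, hS2le]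
    · funext i
      simp only [Pi.add_apply, Pi.smul_apply, smul_eq_mul]
      rw [mul_div_cancel₀ _ hg.ne']
      ring


/-- Optimal lower bound for the s-Frobenius number (Theorem 1 i). -/
theorem stmt_0 {d : ℕ} (hd : 2 ≤ d) (s : ℕ) (hs : 1 ≤ s)
    (a : Fin (d + 1) → ℤ) (hpos : ∀ i, 0 < a i)
    (hprim : Finset.univ.gcd a = 1) :
    (sFrob s a : ℝ) ≥
      theta s d (stdSimplex' d) * (∏ i, (a i : ℝ)) ^ ((1 : ℝ) / d) - ∑ i, (a i : ℝ) := by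
  classical
  -- Bezout coefficients
  obtain ⟨w, hw⟩ : ∃ w : Fin (d+1) → ℤ, ∑ i, a i * w i = 1 := by
    obtain ⟨w, hw⟩ := bezout_finset a Finset.univ
    rw [hprim] at hw; exact ⟨w, hw⟩
  set i0 : Fin (d+1) := ⟨0, by omega⟩ with hi0
  set i1 : Fin (d+1) := ⟨1, by omega⟩ with hi1
  have h01 : i0 ≠ i1 := by
    simp [hi0, hi1, Fin.ext_iff]
  set T0 : ℤ := (∑ i ∈ Finset.univ.erase i0, a i * a i0) + (s:ℤ) * (a i0 * a i1) with hT0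
  have hmany : ∀ b : ℤ, T0 ≤ b → s ≤ (reps a b).ncard := by
    intro b hb
    set V : Finset (Fin (d+1) → ℤ) := (Finset.range s).image (fun j => sol a w i0 i1 b j) with hV
    have hVsub : ↑V ⊆ reps a b := by
      intro y hy
      obtain ⟨j, hj, rfl⟩ := Finset.mem_image.mp (Finset.mem_coe.mp hy)
      exact sol_mem a w hpos i0 i1 h01 hw b s j (Finset.mem_range.mp hj) hb
    have hVinj : Set.InjOn (fun j => sol a w i0 i1 b j) ↑(Finset.range s) := by
      intro j _ j' _ heq
      have h1 : sol a w i0 i1 b j i1 = sol a w i0 i1 b j' i1 := congrFun heq i1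
      simp only [sol, if_neg (Ne.symm h01), if_pos rfl, if_true] at h1
      have h2 : (j:ℤ) * a i0 = (j':ℤ) * a i0 := by linarith
      have h3 : (j:ℤ) = (j':ℤ) := mul_right_cancel₀ (hpos i0).ne' h2
      exact_mod_cast h3
    have hVcard : V.card = s := by
      rw [hV, Finset.card_image_of_injOn hVinj, Finset.card_range]
    calc s = V.card := hVcard.symm
      _ = (↑V : Set (Fin (d+1) → ℤ)).ncard := (Set.ncard_coe_finset V).symm
      _ ≤ (reps a b).ncard := Set.ncard_le_ncard hVsub (reps_finite hpos b)
  have hFrob : sFrob s a = sSup {b : ℤ | (reps a b).ncard < s} := rfl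
  set Fs : ℤ := sFrob s a with hFsdef
  have hbdd : BddAbove {b : ℤ | (reps a b).ncard < s} := by
    refine ⟨T0, fun b hb => ?_⟩
    by_contra h
    exact absurd (hmany b (le_of_lt (not_le.mp h))) (not_le.mpr hb)
  have hmem_ne : (-1 : ℤ) ∈ {b : ℤ | (reps a b).ncard < s} := by
    have hempty : reps a (-1) = ∅ := by
      ext x
      simp only [reps, Set.mem_setOf_eq, Set.mem_empty_iff_false, iff_false, not_and]
      intro hx0 hxs
      have h4 : (0:ℤ) ≤ ∑ i, a i * x i :=
        Finset.sum_nonneg (fun i _ => mul_nonneg (hpos i).le (hx0 i))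
      omega
    rw [Set.mem_setOf_eq, hempty]
    rw [Set.ncard_empty]; omega
  have hFs1 : (-1 : ℤ) ≤ Fs := le_csSup hbdd hmem_ne
  have hFs2 : ∀ b : ℤ, Fs < b → s ≤ (reps a b).ncard := by
    intro b hb
    by_contra h
    push_neg at h
    have h5 : b ≤ Fs := le_csSup hbdd h
    omega
  -- the lattice basis
  set a' : Fin d → ℤ := fun i => a i.castSucc with ha'
  set N : ℤ := a (Fin.last d) with hNd
  have hN : 0 < N := hpos _
  choose v hv1 hv2 hv3 using fun k : Fin d => exists_basis_vec (a' := a') (N := N) hN k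
  have hGd : Gch a' N d = 1 := by
    have hdvd1 : ((Gch a' N d : ℕ) : ℤ) ∣ Finset.univ.gcd a := by
      refine Finset.dvd_gcd (fun i _ => ?_)
      refine Fin.lastCases ?_ (fun j => ?_) i
      · rw [← hNd]; exact Gch_dvd_N hN d
      · have h2 : Gch a' N d ∣ Gch a' N ((j:ℕ)+1) := Gch_dvd_of_le (by omega)
        have h3 : (Gch a' N ((j:ℕ)+1) : ℤ) ∣ a' j := by
          have := Gch_dvd_a (a' := a') (N := N) (j:ℕ) j.isLt
          simpa using this
        exact (Int.natCast_dvd_natCast.mpr h2).trans h3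
    rw [hprim] at hdvd1
    have h6 : Gch a' N d ∣ 1 := by exact_mod_cast hdvd1
    exact Nat.dvd_one.mp h6
  set C : Matrix (Fin d) (Fin d) ℤ := Matrix.of (fun i j => v j i) with hC
  have hCtri : C.BlockTriangular id := by
    intro i j hij
    exact hv1 j i hij
  have hCdet : C.det = N := by
    rw [Matrix.det_of_upperTriangular hCtri]
    calc ∏ i : Fin d, C i i
        = ∏ i : Fin d, ((Gch a' N (i:ℕ) / Gch a' N ((i:ℕ)+1) : ℕ) : ℤ) :=
          Finset.prod_congr rfl (fun i _ => hv2 i)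
      _ = ((∏ i : Fin d, (Gch a' N (i:ℕ) / Gch a' N ((i:ℕ)+1)) : ℕ) : ℤ) := by
          rw [Nat.cast_prod]
      _ = ((∏ k ∈ Finset.range d, (Gch a' N k / Gch a' N (k+1)) : ℕ) : ℤ) := by
          rw [Fin.prod_univ_eq_prod_range (fun k => Gch a' N k / Gch a' N (k+1)) d]
      _ = ((Gch a' N 0 : ℕ) : ℤ) := by
          have h7 := Gch_prod (a' := a') (N := N) d
          rw [hGd, mul_one] at h7
          rw [h7]
      _ = N := by
          have h8 : Gch a' N 0 = N.toNat := rfl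
          rw [h8]; exact Int.toNat_of_nonneg hN.le
  set B : Matrix (Fin d) (Fin d) ℝ := Matrix.of (fun i j => ((a' i * C i j : ℤ) : ℝ)) with hBdef
  have hBij : ∀ i j, B i j = ((a i.castSucc * v j i : ℤ) : ℝ) := fun i j => rfl
  have hBfact : B = (Matrix.diagonal (fun i => (a' i : ℝ))) * ((Int.castRingHom ℝ).mapMatrix C) := by
    ext i j
    rw [Matrix.diagonal_mul]
    simp only [RingHom.mapMatrix_apply, Matrix.map_apply, hBdef, Matrix.of_apply,
      Int.coe_castRingHom]
    push_cast; ring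
  have hBdet : B.det = (∏ i : Fin d, (a' i : ℝ)) * (N : ℝ) := by
    rw [hBfact, Matrix.det_mul, Matrix.det_diagonal, ← RingHom.map_det, hCdet]
    simp
  have hBdetpos : 0 < B.det := by
    rw [hBdet]
    refine mul_pos (Finset.prod_pos (fun i _ => ?_)) (by exact_mod_cast hN)
    exact_mod_cast hpos i.castSucc
  have habsdet : |B.det| = ∏ i, (a i : ℝ) := by
    rw [abs_of_pos hBdetpos, hBdet, Fin.prod_univ_castSucc (f := fun i => (a i : ℝ))]
  -- spanning property
  have hspan : ∀ z : Fin d → ℤ, (a (Fin.last d)) ∣ ∑ j, a j.castSucc * z j →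
      ∃ wz : Fin d → ℤ, ∀ i, z i = ∑ j, wz j * v j i := by
    intro z hz
    exact span_lattice hN v hv1 hv2 hv3 d le_rfl z hz (fun i hi => absurd i.isLt (by omega))
  -- covering property
  have hcov := covering_mem hd hs a hpos v hspan Fs hFs1 hFs2 B hBij
  set K := stdSimplex' d with hK
  set g : ℝ := (Fs : ℝ) + ∑ i, (a i : ℝ) with hg
  have hmu0 : 0 ≤ muCov s K (latSet B) := Real.sInf_nonneg (fun μ hμ => hμ.1.le)
  have hmule : muCov s K (latSet B) ≤ g :=
    csInf_le ⟨0, fun μ hμ => hμ.1.le⟩ ⟨hcov.1, hcov.2⟩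
  have hP : 0 < ∏ i, (a i : ℝ) := Finset.prod_pos (fun i _ => by exact_mod_cast hpos i)
  set X : ℝ := (∏ i, (a i : ℝ)) ^ ((1:ℝ)/d) with hX
  have hXpos : 0 < X := Real.rpow_pos_of_pos hP _
  have htheta_le : theta s d K ≤ muCov s K (latSet B) / X := by
    have hmem : muCov s K (latSet B) / |B.det| ^ ((1:ℝ)/(d:ℕ)) ∈
        {r : ℝ | ∃ B' : Matrix (Fin d) (Fin d) ℝ, B'.det ≠ 0 ∧
          r = muCov s K (latSet B') / |B'.det| ^ ((1 : ℝ) / d)} := ⟨B, hBdetpos.ne', rfl⟩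
    have hbddB : BddBelow {r : ℝ | ∃ B' : Matrix (Fin d) (Fin d) ℝ, B'.det ≠ 0 ∧
        r = muCov s K (latSet B') / |B'.det| ^ ((1 : ℝ) / d)} := by
      refine ⟨0, ?_⟩
      rintro r ⟨B', _, rfl⟩
      exact div_nonneg (Real.sInf_nonneg fun μ hμ => hμ.1.le)
        (Real.rpow_nonneg (abs_nonneg _) _)
    have h9 := csInf_le hbddB hmem
    rwa [habsdet, ← hX] at h9
  have hchain : theta s d K * X ≤ g :=
    calc theta s d K * X ≤ (muCov s K (latSet B) / X) * X :=
          mul_le_mul_of_nonneg_right htheta_le hXpos.le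
      _ = muCov s K (latSet B) := div_mul_cancel₀ _ hXpos.ne'
      _ ≤ g := hmule
  rw [ge_iff_le]
  have hgoal : theta s d K * X - ∑ i, (a i : ℝ) ≤ (Fs : ℝ) := by
    rw [hg] at hchain; linarith
  exact hgoal


end
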